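/- Let N ~ 𝒩(0, I_d) be a standard Gaussian in ℝ^d, w ∈ S^{d-1} a unit vector, and δ > 0 with δ√d < 1. Then 𝔼[1/(1 + δ‖N‖)] ≥ 1/(1 + δ√d) and 𝔼[δ‖N‖/(1 + δ‖N‖)] ≤ δ√d/(1 + δ√d). Consequently, 𝔼[⟨(w + δN)/‖w + δN‖, w⟩] ≥ 1 - 3δ√d/(1 + δ√d), hence 𝔼[‖(w + δN)/‖w + δN‖ - w‖²] ≤ 6δ√d/(1 + δ√d). -/

import Mathlib

open RealInnerProductSpace MeasureTheory
open ProbabilityTheory Real Set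
open scoped NNReal ENNReal


/-! ### Gaussian second moment -/

lemma gauss_pdf_eq (x : ℝ) : gaussianPDFReal 0 1 x = (√(2 * π))⁻¹ * rexp (- x^2 / 2) := by
  simp [gaussianPDFReal]

lemma gauss_wd : gaussianReal 0 1 =
    (volume : Measure ℝ).withDensity (fun x => ((gaussianPDFReal 0 1 x).toNNReal : ℝ≥0∞)) := by
  rw [gaussianReal_of_var_ne_zero _ one_ne_zero]
  rfl

lemma gauss_integral (g : ℝ → ℝ) :
    ∫ x, g x ∂(gaussianReal 0 1) = ∫ x, gaussianPDFReal 0 1 x * g x := by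
  rw [gauss_wd, integral_withDensity_eq_integral_smul
    ((measurable_gaussianPDFReal 0 1).real_toNNReal)]
  congr 1 with x
  simp [NNReal.smul_def, Real.coe_toNNReal _ (gaussianPDFReal_nonneg 0 1 x)]

lemma gauss_integrable_iff (g : ℝ → ℝ) :
    Integrable g (gaussianReal 0 1) ↔ Integrable (fun x => gaussianPDFReal 0 1 x * g x) volume := by
  rw [gauss_wd, integrable_withDensity_iff_integrable_smul
    ((measurable_gaussianPDFReal 0 1).real_toNNReal)]
  constructor <;> intro h <;> refine h.congr (Filter.Eventually.of_forall fun x => ?_) <;>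
    simp [NNReal.smul_def, Real.coe_toNNReal _ (gaussianPDFReal_nonneg 0 1 x)]

lemma int_sq_exp : ∫ x : ℝ, x^2 * rexp (- x^2 / 2) = √(2 * π) := by
  have h0 : (fun x : ℝ => x^2 * rexp (- x^2/2))
      = (fun x : ℝ => (fun t : ℝ => t^2 * rexp (- t^2/2)) |x|) := by
    funext x; simp only [sq_abs]
  rw [h0, integral_comp_abs (f := fun t : ℝ => t^2 * rexp (- t^2/2))]
  have hconv : ∀ x : ℝ, x ^ (2:ℝ) * rexp (-(1/2) * x ^ (2:ℝ)) = x^2 * rexp (- x^2/2) := by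
    intro x
    have e1 : x ^ (2:ℝ) = x^2 := by rw [← Real.rpow_natCast x 2]; norm_num
    rw [e1, show -(1/2:ℝ) * x^2 = -x^2/2 by ring]
  have h := integral_rpow_mul_exp_neg_mul_rpow (p := 2) (q := 2) (b := 1/2)
    (by norm_num) (by norm_num) (by norm_num)
  simp_rw [hconv] at h
  rw [h]
  rw [show ((2:ℝ)+1)/2 = 1/2 + 1 by norm_num, Real.Gamma_add_one (by norm_num),
    Real.Gamma_one_half_eq]
  rw [show (-((2:ℝ)+1)/2) = (-(3/2) : ℝ) by norm_num]
  rw [show ((1:ℝ)/2) = 2⁻¹ by norm_num, Real.inv_rpow (by norm_num),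
    ← Real.rpow_neg (by norm_num), neg_neg]
  rw [show ((3:ℝ)/2) = 1 + 2⁻¹ by norm_num, Real.rpow_add (by norm_num), Real.rpow_one]
  rw [show ((2:ℝ))^((2:ℝ)⁻¹) = √2 by rw [Real.sqrt_eq_rpow]; norm_num]
  rw [Real.sqrt_mul (by norm_num)]
  ring

lemma gauss_sq_integrable : Integrable (fun x : ℝ => x^2) (gaussianReal 0 1) := by
  rw [gauss_integrable_iff]
  have h := integrable_rpow_mul_exp_neg_mul_sq (b := (1:ℝ)/2) (by norm_num) (s := 2) (by norm_num)
  refine (h.const_mul ((√(2 * π))⁻¹)).congr (Filter.Eventually.of_forall fun x => ?_)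
  simp only [gauss_pdf_eq]
  have e1 : x ^ (2:ℝ) = x^2 := by rw [← Real.rpow_natCast x 2]; norm_num
  rw [e1]
  ring_nf

lemma gauss_sq : ∫ x, x^2 ∂(gaussianReal 0 1) = 1 := by
  rw [gauss_integral]
  have : ∀ x : ℝ, gaussianPDFReal 0 1 x * x ^ 2 = (√(2 * π))⁻¹ * (x^2 * rexp (- x^2/2)) := by
    intro x; rw [gauss_pdf_eq]; ring
  simp_rw [this, integral_const_mul, int_sq_exp]
  rw [inv_mul_cancel₀]
  positivity

/-! ### pi measure lemmas -/

variable {d : ℕ}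

local notation "Pd" => Measure.pi fun _ : Fin d => gaussianReal (0:ℝ) (1:ℝ≥0)

lemma pi_map_eval (i : Fin d) :
    Measure.map (Function.eval i) Pd = gaussianReal 0 1 := by
  refine Measure.ext fun s hs => ?_
  rw [Measure.map_apply (measurable_pi_apply i) hs, Set.eval_preimage, Measure.pi_pi]
  rw [Finset.prod_eq_single i (fun j _ hj => by simp [Function.update_of_ne hj])
    (fun h => absurd (Finset.mem_univ i) h)]
  simp

lemma gauss_neg : Measure.map (fun x : ℝ => -x) (gaussianReal 0 1) = gaussianReal 0 1 := by
  have h := gaussianReal_map_const_mul (μ := 0) (v := 1) (-1)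
  simp only [neg_one_mul, neg_zero] at h
  rw [h]
  congr 1
  ext
  norm_num

lemma pi_neg : Measure.map (fun y : Fin d → ℝ => -y) Pd = Pd := by
  have := measurePreserving_pi (fun _ : Fin d => gaussianReal 0 1)
    (fun _ => gaussianReal 0 1) (f := fun _ t => -t)
    (fun _ => ⟨measurable_neg, gauss_neg⟩)
  exact this.map_eq

lemma eval_sq_integrable (i : Fin d) : Integrable (fun y : Fin d → ℝ => (y i)^2) Pd := by
  have h : Integrable (fun t : ℝ => t^2) (Measure.map (Function.eval i : (Fin d → ℝ) → ℝ) Pd) := by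
    rw [pi_map_eval]; exact gauss_sq_integrable
  exact (integrable_map_measure
    (by rw [pi_map_eval]; exact gauss_sq_integrable.aestronglyMeasurable)
    (measurable_pi_apply i).aemeasurable).mp h

lemma eval_sq_integral (i : Fin d) : ∫ y : Fin d → ℝ, (y i)^2 ∂Pd = 1 := by
  have h := integral_map (μ := Pd) (φ := (Function.eval i : (Fin d → ℝ) → ℝ))
    (f := fun t : ℝ => t^2) (measurable_pi_apply i).aemeasurable
    (by rw [pi_map_eval]; exact gauss_sq_integrable.aestronglyMeasurable)
  rw [pi_map_eval, gauss_sq] at h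
  exact h.symm

lemma normsq_eq (x : EuclideanSpace ℝ (Fin d)) : ‖x‖^2 = ∑ i, (x i)^2 := by
  rw [EuclideanSpace.norm_eq, Real.sq_sqrt (Finset.sum_nonneg fun i _ => sq_nonneg _)]
  simp [Real.norm_eq_abs, sq_abs]

lemma musq_integral (μ : Measure (EuclideanSpace ℝ (Fin d)))
    (hμ : μ = Measure.map (MeasurableEquiv.toLp 2 (Fin d → ℝ)) Pd) :
    ∫ x, ‖x‖^2 ∂μ = d := by
  rw [hμ, integral_map_equiv]
  simp_rw [normsq_eq]
  have : ∀ y : Fin d → ℝ, (∑ i, (((MeasurableEquiv.toLp 2 (Fin d → ℝ)) y) i)^2)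
      = ∑ i, (y i)^2 := fun y => rfl
  simp_rw [this]
  rw [integral_finset_sum _ (fun i _ => eval_sq_integrable i)]
  simp [eval_sq_integral]

lemma musq_integrable (μ : Measure (EuclideanSpace ℝ (Fin d)))
    (hμ : μ = Measure.map (MeasurableEquiv.toLp 2 (Fin d → ℝ)) Pd) :
    Integrable (fun x => ‖x‖^2) μ := by
  rw [hμ, integrable_map_equiv]
  refine (integrable_finset_sum Finset.univ (fun i _ => eval_sq_integrable i)).congr
    (Filter.Eventually.of_forall fun y => ?_)
  exact (normsq_eq _).symm

lemma mu_neg (μ : Measure (EuclideanSpace ℝ (Fin d)))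
    (hμ : μ = Measure.map (MeasurableEquiv.toLp 2 (Fin d → ℝ)) Pd) :
    Measure.map (fun x : EuclideanSpace ℝ (Fin d) => -x) μ = μ := by
  rw [hμ, Measure.map_map measurable_neg (MeasurableEquiv.toLp 2 (Fin d → ℝ)).measurable]
  have : ((fun x : EuclideanSpace ℝ (Fin d) => -x) ∘ (MeasurableEquiv.toLp 2 (Fin d → ℝ)))
      = ((MeasurableEquiv.toLp 2 (Fin d → ℝ)) ∘ (fun y : Fin d → ℝ => -y)) := rfl
  rw [this, ← Measure.map_map (MeasurableEquiv.toLp 2 (Fin d → ℝ)).measurable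
    measurable_neg, pi_neg]

/-! ### pointwise inequalities -/

lemma key2 {δ s r : ℝ} (hδ : 0 < δ) (hs : 0 < s) (hr : 0 ≤ r) :
    δ*r/(1+δ*r) ≤ δ*s/(1+δ*s) + δ/(1+δ*s)^2 * (r - s) := by
  have h1 : (0:ℝ) < 1+δ*r := by positivity
  have h2 : (0:ℝ) < 1+δ*s := by positivity
  have key : (δ*s/(1+δ*s) + δ/(1+δ*s)^2 * (r-s)) - δ*r/(1+δ*r)
      = δ^2*(r-s)^2/((1+δ*s)^2*(1+δ*r)) := by
    field_simp
    ring
  have h3 : (0:ℝ) ≤ δ^2*(r-s)^2/((1+δ*s)^2*(1+δ*r)) := by positivity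
  linarith

lemma key3 {d : ℕ} {δ : ℝ} (hδ : 0 < δ) (w x : EuclideanSpace ℝ (Fin d)) (hw : ‖w‖ = 1) :
    3*(1/(1+δ*‖x‖)) - 2 + δ*⟪x,w⟫/(1+δ*‖x‖) ≤ ⟪(‖w + δ • x‖)⁻¹ • (w + δ • x), w⟫ := by
  have ht : (0:ℝ) ≤ δ*‖x‖ := by positivity
  have h1t : (0:ℝ) < 1 + δ*‖x‖ := by positivity
  set u := w + δ • x with hu
  have hnd : ‖δ • x‖ = δ*‖x‖ := by
    rw [norm_smul, Real.norm_eq_abs, abs_of_pos hδ]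
  have hu1 : ‖u‖ ≤ 1 + δ*‖x‖ := by
    calc ‖u‖ ≤ ‖w‖ + ‖δ • x‖ := norm_add_le _ _
    _ = 1 + δ*‖x‖ := by rw [hw, hnd]
  have hu2 : 1 - δ*‖x‖ ≤ ‖u‖ := by
    have huw : u - δ • x = w := by rw [hu]; abel
    have : ‖w‖ ≤ ‖u‖ + ‖δ • x‖ := by
      calc ‖w‖ = ‖u - δ • x‖ := by rw [huw]
      _ ≤ ‖u‖ + ‖δ • x‖ := norm_sub_le _ _
    rw [hw, hnd] at this
    linarith
  have ha : ⟪u,w⟫ = 1 + δ*⟪x,w⟫ := by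
    rw [hu, inner_add_left, real_inner_smul_left, real_inner_self_eq_norm_mul_norm, hw]
    ring
  have hcs : |⟪u,w⟫| ≤ ‖u‖ := by
    calc |⟪u,w⟫| ≤ ‖u‖ * ‖w‖ := abs_real_inner_le_norm u w
    _ = ‖u‖ := by rw [hw, mul_one]
  rw [real_inner_smul_left]
  have hrhs : 3*(1/(1+δ*‖x‖)) - 2 + δ*⟪x,w⟫/(1+δ*‖x‖)
      = (⟪u,w⟫ - 2*(δ*‖x‖))/(1+δ*‖x‖) := by
    rw [ha]
    field_simp
    ring
  rw [hrhs]
  rcases eq_or_lt_of_le (norm_nonneg u) with h0 | h0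
  · have hA : ⟪u,w⟫ = 0 := by
      have := hcs
      rw [← h0] at this
      exact abs_eq_zero.mp (le_antisymm this (abs_nonneg _))
    rw [← h0, hA]
    simp only [inv_zero, mul_zero]
    apply div_nonpos_of_nonpos_of_nonneg <;> nlinarith
  · rw [inv_mul_eq_div, div_le_div_iff₀ h1t h0]
    nlinarith [mul_nonneg (by linarith [neg_abs_le ⟪u,w⟫] : (0:ℝ) ≤ ⟪u,w⟫ + ‖u‖)
        (by linarith : (0:ℝ) ≤ 1 + δ*‖x‖ - ‖u‖),
      mul_nonneg h0.le (by linarith : (0:ℝ) ≤ ‖u‖ - (1 - δ*‖x‖))]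

lemma key4 {d : ℕ} {δ : ℝ} (hδ : 0 < δ) (w x : EuclideanSpace ℝ (Fin d)) (hw : ‖w‖ = 1) :
    ‖(‖w + δ • x‖)⁻¹ • (w + δ • x) - w‖^2
      ≤ 2 - 2*⟪(‖w + δ • x‖)⁻¹ • (w + δ • x), w⟫ := by
  set u := w + δ • x
  set v := (‖u‖)⁻¹ • u with hv
  have hvn : ‖v‖ ≤ 1 := by
    rw [hv, norm_smul, Real.norm_eq_abs, abs_inv, abs_norm]
    rcases eq_or_ne ‖u‖ 0 with h | h
    · rw [h]; simp
    · rw [inv_mul_cancel₀ h]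
  have hexp := norm_sub_sq_real v w
  rw [hw] at hexp
  nlinarith [norm_nonneg v]

lemma vbound {d : ℕ} {δ : ℝ} (hδ : 0 < δ) (w x : EuclideanSpace ℝ (Fin d)) (hw : ‖w‖ = 1) :
    ‖(‖w + δ • x‖)⁻¹ • (w + δ • x)‖ ≤ 1 := by
  rw [norm_smul, Real.norm_eq_abs, abs_inv, abs_norm]
  rcases eq_or_ne ‖w + δ • x‖ 0 with h | h
  · rw [h]; simp
  · rw [inv_mul_cancel₀ h]

theorem stmt12 {d : ℕ} (hd : 0 < d) (δ : ℝ) (hδ : 0 < δ) (hδd : δ * Real.sqrt d < 1)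
    (w : EuclideanSpace ℝ (Fin d)) (hw : ‖w‖ = 1)
    (μ : Measure (EuclideanSpace ℝ (Fin d)))
    (hμ : μ = Measure.map (MeasurableEquiv.toLp 2 (Fin d → ℝ))
      (Measure.pi fun _ : Fin d => ProbabilityTheory.gaussianReal 0 1)) :
    (1 / (1 + δ * Real.sqrt d) ≤ ∫ x, 1 / (1 + δ * ‖x‖) ∂μ) ∧
    (∫ x, δ * ‖x‖ / (1 + δ * ‖x‖) ∂μ ≤ δ * Real.sqrt d / (1 + δ * Real.sqrt d)) ∧
    (1 - 3 * δ * Real.sqrt d / (1 + δ * Real.sqrt d) ≤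
      ∫ x, ⟪(‖w + δ • x‖)⁻¹ • (w + δ • x), w⟫ ∂μ) ∧
    (∫ x, ‖(‖w + δ • x‖)⁻¹ • (w + δ • x) - w‖ ^ 2 ∂μ ≤
      6 * δ * Real.sqrt d / (1 + δ * Real.sqrt d)) := by
  have hd0 : (0:ℝ) < d := Nat.cast_pos.mpr hd
  set s := Real.sqrt d with hs_def
  have hs : 0 < s := Real.sqrt_pos.mpr hd0
  have hs2 : s^2 = (d:ℝ) := Real.sq_sqrt hd0.le
  have h1s : (0:ℝ) < 1 + δ*s := by positivity
  have hprob : IsProbabilityMeasure μ := by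
    rw [hμ]
    exact Measure.isProbabilityMeasure_map
      (MeasurableEquiv.toLp 2 (Fin d → ℝ)).measurable.aemeasurable
  have hsqint := musq_integrable μ hμ
  have hsqval := musq_integral μ hμ
  -- norm is integrable with integral ≤ s
  have iSq1 : Integrable (fun x : EuclideanSpace ℝ (Fin d) => ‖x‖^2 + 1) μ :=
    hsqint.add (integrable_const 1)
  have hnint : Integrable (fun x : EuclideanSpace ℝ (Fin d) => ‖x‖) μ := by
    refine iSq1.mono continuous_norm.aestronglyMeasurable
      (Filter.Eventually.of_forall fun x => ?_)
    rw [Real.norm_eq_abs, Real.norm_eq_abs, abs_of_nonneg (norm_nonneg x),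
      abs_of_nonneg (by positivity)]
    nlinarith [norm_nonneg x]
  have hnle : ∫ x, ‖x‖ ∂μ ≤ s := by
    have hpt : ∀ x : EuclideanSpace ℝ (Fin d), ‖x‖ ≤ (‖x‖^2 + d)/(2*s) := by
      intro x
      rw [le_div_iff₀ (by positivity)]
      nlinarith [sq_nonneg (‖x‖ - s)]
    have icd : Integrable (fun _ : EuclideanSpace ℝ (Fin d) => (d:ℝ)) μ := integrable_const _
    have iden : Integrable (fun x : EuclideanSpace ℝ (Fin d) => (‖x‖^2 + d)/(2*s)) μ :=
      (hsqint.add icd).div_const _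
    have h := integral_mono hnint iden hpt
    rw [integral_div, integral_add hsqint icd, integral_const, hsqval] at h
    simp only [measure_univ, ENNReal.toReal_one, probReal_univ, smul_eq_mul, one_mul] at h
    have heq : ((d:ℝ) + d)/(2*s) = s := by
      rw [← hs2]; field_simp; ring
    linarith
  have hnn0 : 0 ≤ ∫ x, ‖x‖ ∂μ := integral_nonneg fun x => norm_nonneg x
  -- continuity of integrands
  have hm1 : Continuous (fun x : EuclideanSpace ℝ (Fin d) => 1 + δ*‖x‖) :=
    continuous_const.add (continuous_const.mul continuous_norm)
  have hne : ∀ x : EuclideanSpace ℝ (Fin d), 1 + δ*‖x‖ ≠ 0 := fun x => by positivity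
  have hpos : ∀ x : EuclideanSpace ℝ (Fin d), (0:ℝ) < 1 + δ*‖x‖ := fun x => by positivity
  have hc1 : Continuous (fun x : EuclideanSpace ℝ (Fin d) => 1/(1+δ*‖x‖)) :=
    continuous_const.div hm1 hne
  have hc2 : Continuous (fun x : EuclideanSpace ℝ (Fin d) => δ*‖x‖/(1+δ*‖x‖)) :=
    (continuous_const.mul continuous_norm).div hm1 hne
  have hch : Continuous (fun x : EuclideanSpace ℝ (Fin d) => δ*⟪x,w⟫/(1+δ*‖x‖)) :=
    (continuous_const.mul (continuous_id.inner continuous_const)).div hm1 hne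
  -- bounded integrability helper
  have ibdd : ∀ {f : EuclideanSpace ℝ (Fin d) → ℝ}, AEStronglyMeasurable f μ → ∀ C : ℝ,
      (∀ x, |f x| ≤ C) → Integrable f μ := by
    intro f hf C hC
    exact ⟨hf, HasFiniteIntegral.of_bounded (C := C)
      (Filter.Eventually.of_forall fun x => by rw [Real.norm_eq_abs]; exact hC x)⟩
  have i1 : Integrable (fun x : EuclideanSpace ℝ (Fin d) => 1/(1+δ*‖x‖)) μ := by
    refine ibdd hc1.aestronglyMeasurable 1 fun x => ?_
    rw [abs_of_nonneg (by positivity), div_le_one (hpos x)]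
    nlinarith [norm_nonneg x, hδ.le]
  have i2 : Integrable (fun x : EuclideanSpace ℝ (Fin d) => δ*‖x‖/(1+δ*‖x‖)) μ := by
    refine ibdd hc2.aestronglyMeasurable 1 fun x => ?_
    rw [abs_of_nonneg (by positivity), div_le_one (hpos x)]
    linarith [hpos x]
  have ih : Integrable (fun x : EuclideanSpace ℝ (Fin d) => δ*⟪x,w⟫/(1+δ*‖x‖)) μ := by
    refine ibdd hch.aestronglyMeasurable 1 fun x => ?_
    rw [abs_div, abs_of_nonneg (hpos x).le, div_le_one (hpos x), abs_mul,
      abs_of_pos hδ]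
    have := abs_real_inner_le_norm x w
    rw [hw, mul_one] at this
    nlinarith
  -- the direction vector integrands
  have m1 : Measurable (fun x : EuclideanSpace ℝ (Fin d) => w + δ • x) :=
    measurable_const.add (measurable_id.const_smul δ)
  have mg : Measurable (fun x : EuclideanSpace ℝ (Fin d) =>
      ⟪(‖w + δ • x‖)⁻¹ • (w + δ • x), w⟫) :=
    ((m1.norm.inv).smul m1).inner measurable_const
  have ig : Integrable (fun x : EuclideanSpace ℝ (Fin d) =>
      ⟪(‖w + δ • x‖)⁻¹ • (w + δ • x), w⟫) μ := by
    refine ibdd mg.aestronglyMeasurable 1 fun x => ?_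
    have h := abs_real_inner_le_norm ((‖w + δ • x‖)⁻¹ • (w + δ • x)) w
    rw [hw, mul_one] at h
    exact h.trans (vbound hδ w x hw)
  have i4 : Integrable (fun x : EuclideanSpace ℝ (Fin d) =>
      ‖(‖w + δ • x‖)⁻¹ • (w + δ • x) - w‖^2) μ := by
    have mm : Measurable (fun x : EuclideanSpace ℝ (Fin d) =>
        ‖(‖w + δ • x‖)⁻¹ • (w + δ • x) - w‖^2) :=
      (((m1.norm.inv).smul m1).sub measurable_const).norm.pow measurable_const
    refine ibdd mm.aestronglyMeasurable 4 fun x => ?_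
    have h1 : ‖(‖w + δ • x‖)⁻¹ • (w + δ • x) - w‖
        ≤ ‖(‖w + δ • x‖)⁻¹ • (w + δ • x)‖ + ‖w‖ := norm_sub_le _ _
    rw [hw] at h1
    have h2 := (vbound hδ w x hw)
    rw [abs_of_nonneg (by positivity)]
    nlinarith [norm_nonneg ((‖w + δ • x‖)⁻¹ • (w + δ • x) - w)]
  -- claim 2
  have c2 : ∫ x, δ * ‖x‖ / (1 + δ * ‖x‖) ∂μ ≤ δ * s / (1 + δ * s) := by
    have iS : Integrable (fun x : EuclideanSpace ℝ (Fin d) => ‖x‖ - s) μ :=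
      hnint.sub (integrable_const _)
    have iS2 : Integrable (fun x : EuclideanSpace ℝ (Fin d) => δ/(1+δ*s)^2 * (‖x‖ - s)) μ :=
      iS.const_mul _
    have iR : Integrable (fun x : EuclideanSpace ℝ (Fin d) =>
        δ*s/(1+δ*s) + δ/(1+δ*s)^2 * (‖x‖ - s)) μ := (integrable_const _).add iS2
    have hmono := integral_mono i2 iR (fun x => key2 hδ hs (norm_nonneg x))
    rw [integral_add (integrable_const _) iS2, integral_const, integral_const_mul,
      integral_sub hnint (integrable_const _), integral_const] at hmono
    simp only [measure_univ, ENNReal.toReal_one, probReal_univ, smul_eq_mul, one_mul] at hmono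
    have hnp : δ/(1+δ*s)^2 * ((∫ x, ‖x‖ ∂μ) - s) ≤ 0 :=
      mul_nonpos_of_nonneg_of_nonpos (by positivity) (by linarith)
    linarith
  -- claim 1
  have c1 : 1 / (1 + δ * s) ≤ ∫ x, 1 / (1 + δ * ‖x‖) ∂μ := by
    have e12 : ∀ x : EuclideanSpace ℝ (Fin d),
        1/(1+δ*‖x‖) = 1 - δ*‖x‖/(1+δ*‖x‖) := by
      intro x; field_simp; ring
    calc 1/(1+δ*s) = 1 - δ*s/(1+δ*s) := by field_simp; ring
    _ ≤ 1 - ∫ x, δ*‖x‖/(1+δ*‖x‖) ∂μ := by linarith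
    _ = ∫ x, (1 - δ*‖x‖/(1+δ*‖x‖)) ∂μ := by
        rw [integral_sub (integrable_const 1) i2, integral_const]
        simp [measure_univ]
    _ = ∫ x, 1/(1+δ*‖x‖) ∂μ := by
        refine integral_congr_ae (Filter.Eventually.of_forall fun x => ?_)
        simp only [e12]
  -- odd integral is zero
  have hodd : ∫ x, δ*⟪x,w⟫/(1+δ*‖x‖) ∂μ = 0 := by
    have h1 : ∫ x, δ*⟪x,w⟫/(1+δ*‖x‖) ∂μ = ∫ x, δ*⟪-x,w⟫/(1+δ*‖-x‖) ∂μ := by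
      conv_lhs => rw [← mu_neg μ hμ]
      rw [integral_map measurable_neg.aemeasurable
        (by rw [mu_neg μ hμ]; exact hch.aestronglyMeasurable)]
    have h2 : ∀ x : EuclideanSpace ℝ (Fin d),
        δ*⟪-x,w⟫/(1+δ*‖-x‖) = -(δ*⟪x,w⟫/(1+δ*‖x‖)) := by
      intro x; rw [inner_neg_left, norm_neg]; ring
    simp_rw [h2, integral_neg] at h1
    linarith
  -- claim 3
  have c3 : 1 - 3 * δ * s / (1 + δ * s) ≤
      ∫ x, ⟪(‖w + δ • x‖)⁻¹ • (w + δ • x), w⟫ ∂μ := by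
    have iA : Integrable (fun x : EuclideanSpace ℝ (Fin d) => 3*(1/(1+δ*‖x‖)) - 2) μ :=
      (i1.const_mul 3).sub (integrable_const 2)
    have iB : Integrable (fun x : EuclideanSpace ℝ (Fin d) => 3*(1/(1+δ*‖x‖))) μ :=
      i1.const_mul 3
    have hintL : Integrable (fun x : EuclideanSpace ℝ (Fin d) =>
        3*(1/(1+δ*‖x‖)) - 2 + δ*⟪x,w⟫/(1+δ*‖x‖)) μ := iA.add ih
    have hmono := integral_mono hintL ig (fun x => key3 hδ w x hw)
    rw [integral_add iA ih, integral_sub iB (integrable_const 2), integral_const_mul,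
      integral_const, hodd] at hmono
    simp only [measure_univ, ENNReal.toReal_one, probReal_univ, smul_eq_mul, one_mul, add_zero] at hmono
    have heq : 1 - 3*δ*s/(1+δ*s) = 3*(1/(1+δ*s)) - 2 := by
      field_simp
      ring
    calc 1 - 3*δ*s/(1+δ*s) = 3*(1/(1+δ*s)) - 2 := heq
    _ ≤ 3*(∫ x, 1/(1+δ*‖x‖) ∂μ) - 2 := by linarith
    _ ≤ _ := hmono
  -- claim 4
  have c4 : ∫ x, ‖(‖w + δ • x‖)⁻¹ • (w + δ • x) - w‖ ^ 2 ∂μ ≤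
      6 * δ * s / (1 + δ * s) := by
    have iG2 : Integrable (fun x : EuclideanSpace ℝ (Fin d) =>
        2*⟪(‖w + δ • x‖)⁻¹ • (w + δ • x), w⟫) μ := ig.const_mul 2
    have iR4 : Integrable (fun x : EuclideanSpace ℝ (Fin d) =>
        2 - 2*⟪(‖w + δ • x‖)⁻¹ • (w + δ • x), w⟫) μ := (integrable_const 2).sub iG2
    have hmono := integral_mono i4 iR4 (fun x => key4 hδ w x hw)
    rw [integral_sub (integrable_const 2) iG2, integral_const, integral_const_mul] at hmono
    simp only [measure_univ, ENNReal.toReal_one, probReal_univ, smul_eq_mul, one_mul] at hmono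
    have h2A : 6*δ*s/(1+δ*s) = 2*(3*δ*s/(1+δ*s)) := by ring
    linarith
  exact ⟨c1, c2, c3, c4⟩
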